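/- If Y is a first countable countably compact Hausdorff space containing X as a dense subspace, then Y is a maximal first-countable extension of X, i.e., Y is closed in every first countable Hausdorff space Z containing Y as a subspace. -/

import Mathlib

def CountablyCompactOn {Z : Type*} [TopologicalSpace Z] (Y : Set Z) : Prop :=
  ∀ U : ℕ → Set Z, (∀ n, IsOpen (U n)) → Y ⊆ ⋃ n, U n →
    ∃ F : Finset ℕ, Y ⊆ ⋃ n ∈ F, U n

/-- Every sequence in a countably compact first countable space has a cluster point. -/
lemma exists_clusterPt {Y : Type} [TopologicalSpace Y]
    (hY : CountablyCompactOn (Set.univ : Set Y)) (y : ℕ → Y) :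
    ∃ p : Y, MapClusterPt p Filter.atTop y := by
  set F : ℕ → Set Y := fun n => closure (y '' Set.Ici n) with hF
  have hne : (⋂ n, F n).Nonempty := by
    by_contra h
    rw [Set.not_nonempty_iff_eq_empty] at h
    obtain ⟨Fs, hFs⟩ := hY (fun n => (F n)ᶜ) (fun n => (isClosed_closure).isOpen_compl)
      (by
        intro x _
        by_contra hx
        simp only [Set.mem_iUnion, Set.mem_compl_iff, not_exists, not_not] at hx
        exact (Set.eq_empty_iff_forall_notMem.mp h) x (Set.mem_iInter.mpr hx))
    have hmem : y (Fs.sup id) ∈ ⋃ n ∈ Fs, (F n)ᶜ := hFs (Set.mem_univ _)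
    simp only [Set.mem_iUnion, Set.mem_compl_iff] at hmem
    obtain ⟨n, hn, hnot⟩ := hmem
    exact hnot (subset_closure ⟨Fs.sup id, Finset.le_sup (f := id) hn, rfl⟩)
  obtain ⟨p, hp⟩ := hne
  refine ⟨p, ?_⟩
  rw [mapClusterPt_iff_frequently]
  intro s hs
  rw [Filter.frequently_atTop]
  intro n
  have hpn : p ∈ F n := Set.mem_iInter.mp hp n
  obtain ⟨q, hq1, hq2⟩ := mem_closure_iff_nhds.mp hpn s hs
  obtain ⟨k, hk, rfl⟩ := hq2
  exact ⟨k, hk, hq1⟩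

/-- If `Y` is a first countable countably compact Hausdorff space containing `X` as a
dense subspace, then `Y` is a maximal first-countable extension of `X`: `Y` is closed
in every first countable Hausdorff space `Z` containing `Y` as a subspace. -/
theorem stmt3 {Y : Type} [TopologicalSpace Y] [FirstCountableTopology Y] [T2Space Y]
    (hY : CountablyCompactOn (Set.univ : Set Y))
    (X : Set Y) (hX : Dense X) :
    ∀ (Z : Type) [TopologicalSpace Z] [FirstCountableTopology Z] [T2Space Z]
      (e : Y → Z), Topology.IsEmbedding e → IsClosed (Set.range e) := by
  intro Z _ _ _ e he
  apply IsSeqClosed.isClosed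
  intro u z hu hz
  choose y hy using hu
  obtain ⟨p, hp⟩ := exists_clusterPt hY y
  obtain ⟨φ, hφ, hφt⟩ := TopologicalSpace.FirstCountableTopology.tendsto_subseq hp
  have h1 : Filter.Tendsto (u ∘ φ) Filter.atTop (nhds (e p)) := by
    have : u ∘ φ = e ∘ (y ∘ φ) := by
      funext n; simp [Function.comp, hy]
    rw [this]
    exact (he.continuous.tendsto p).comp hφt
  have h2 : Filter.Tendsto (u ∘ φ) Filter.atTop (nhds z) :=
    hz.comp hφ.tendsto_atTop
  exact ⟨p, (tendsto_nhds_unique h1 h2)⟩
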